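/- Let c_1, c_2 > 0 and 0 < h ≤ τ < c_1/c_2. Let U : [a, a+h] → ℝ be continuously differentiable with U(t) ≥ 0 for all t, U(a) > 0, and suppose that for all t ∈ [a, a+h], U̇(t) ≤ −c_1 U(t) + c_2 (t − a) √(U(t)) · √(max_{s∈[a,a+h]} U(s)). Then max_{s∈[a,a+h]} U(s) = U(a); i.e., U(t) ≤ U(a) for all t ∈ [a, a+h]. -/

import Mathlib

/-- if `U ≥ 0` is continuously differentiable on `[a, a+h]` with `U(a) > 0`,
`0 < h ≤ τ < c₁/c₂`, and `U̇(t) ≤ −c₁U(t) + c₂(t−a)√(U(t))·√(max U)` on the interval, then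
the maximum of `U` over `[a, a+h]` is attained at `a`, i.e. `U(t) ≤ U(a)` on the interval. -/
theorem stmt9 (a h τ c₁ c₂ : ℝ) (hc₁ : 0 < c₁) (hc₂ : 0 < c₂)
    (hh : 0 < h) (hhτ : h ≤ τ) (hτ : τ < c₁ / c₂)
    (U U' : ℝ → ℝ)
    (hderiv : ∀ t ∈ Set.Icc a (a + h), HasDerivWithinAt U (U' t) (Set.Icc a (a + h)) t)
    (hcont : ContinuousOn U' (Set.Icc a (a + h)))
    (hnonneg : ∀ t ∈ Set.Icc a (a + h), 0 ≤ U t)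
    (hUa : 0 < U a)
    (hineq : ∀ t ∈ Set.Icc a (a + h),
      U' t ≤ -c₁ * U t + c₂ * (t - a) * Real.sqrt (U t) *
        Real.sqrt (sSup (U '' Set.Icc a (a + h)))) :
    ∀ t ∈ Set.Icc a (a + h), U t ≤ U a := by
  have ha : a ∈ Set.Icc a (a + h) := ⟨le_refl a, by linarith⟩
  have hUcont : ContinuousOn U (Set.Icc a (a + h)) :=
    fun t ht => (hderiv t ht).continuousWithinAt
  obtain ⟨t₀, ht₀, hmax⟩ := (isCompact_Icc (a := a) (b := a + h)).exists_isMaxOn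
    ⟨a, ha⟩ hUcont
  -- sSup of image equals U t₀
  have hsup : sSup (U '' Set.Icc a (a + h)) = U t₀ := by
    apply IsGreatest.csSup_eq
    exact ⟨Set.mem_image_of_mem U ht₀, fun y ⟨x, hx, hxy⟩ => hxy ▸ hmax hx⟩
  have hM : 0 < U t₀ := lt_of_lt_of_le hUa (hmax ha)
  -- If t₀ = a we are done; otherwise derive a contradiction
  have key : U t₀ ≤ U a := by
    rcases eq_or_lt_of_le ht₀.1 with heq | hlt
    · rw [← heq]
    · exfalso
      -- Fermat: derivative in direction a - t₀ is ≤ 0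
      have hseg : segment ℝ t₀ a ⊆ Set.Icc a (a + h) := by
        rw [segment_symm, segment_eq_Icc (le_of_lt hlt)]
        exact Set.Icc_subset_Icc le_rfl ht₀.2
      have hy : a - t₀ ∈ posTangentConeAt (Set.Icc a (a + h)) t₀ :=
        sub_mem_posTangentConeAt_of_segment_subset hseg
      have hlm : IsLocalMaxOn U (Set.Icc a (a + h)) t₀ := hmax.localize
      have hfd := (hderiv t₀ ht₀).hasFDerivWithinAt
      have hle := hlm.hasFDerivWithinAt_nonpos hfd hy
      simp only [ContinuousLinearMap.smulRight_apply, ContinuousLinearMap.one_apply,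
        ContinuousLinearMap.toSpanSingleton_apply, smul_eq_mul] at hle
      -- hle : (a - t₀) * U' t₀ ≤ 0, and a - t₀ < 0, so U' t₀ ≥ 0
      have hd0 : 0 ≤ U' t₀ := by nlinarith [hle]
      -- But the differential inequality gives U' t₀ < 0
      -- hi : U' t₀ ≤ -c₁ * U t₀ + c₂ * (t₀ - a) * √(U t₀) * √(U t₀)
      have hsq : Real.sqrt (U t₀) * Real.sqrt (U t₀) = U t₀ :=
        Real.mul_self_sqrt (le_of_lt hM)
      have hi' : U' t₀ ≤ (-c₁ + c₂ * (t₀ - a)) * U t₀ := by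
        calc U' t₀ ≤ -c₁ * U t₀ + c₂ * (t₀ - a) * Real.sqrt (U t₀) *
            Real.sqrt (sSup (U '' Set.Icc a (a + h))) := hineq t₀ ht₀
          _ = (-c₁ + c₂ * (t₀ - a)) * U t₀ := by rw [hsup, mul_assoc, hsq]; ring
      have hcτ : c₂ * τ < c₁ := by
        have := (lt_div_iff₀ hc₂).mp hτ; linarith
      have ht₀h : t₀ - a ≤ τ := by
        have := ht₀.2; linarith
      have hneg : (-c₁ + c₂ * (t₀ - a)) * U t₀ < 0 := by
        apply mul_neg_of_neg_of_pos _ hM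
        have : c₂ * (t₀ - a) ≤ c₂ * τ := by
          apply mul_le_mul_of_nonneg_left ht₀h (le_of_lt hc₂)
        linarith
      linarith
  intro t ht
  exact le_trans (hmax ht) key
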